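/- Let $R$ be a Noetherian ring of prime characteristic $p$, and let $\mathfrak{a}, J \subseteq R$ be ideals with $\mathfrak{a} \subseteq \sqrt{J}$. Then the limit $\lim_{e \to \infty} \frac{\nu^J_{\mathfrak{a}}(p^e)}{p^e}$ exists (the $F$-threshold $c^J(\mathfrak{a})$ exists). -/

import Mathlib

open Filter

/-- The Frobenius-type power `J^{[q]}`: the ideal generated by the `q`-th powers of
elements of `J`. -/
def frobeniusPower {R : Type*} [CommSemiring R] (J : Ideal R) (q : ℕ) : Ideal R :=
  Ideal.span ((fun x => x ^ q) '' (J : Set R))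

section Aux

variable {R : Type*} [CommRing R]

lemma fp_mono {I J : Ideal R} (h : I ≤ J) (q : ℕ) :
    frobeniusPower I q ≤ frobeniusPower J q :=
  Ideal.span_mono (Set.image_mono h)

lemma mem_fp {I : Ideal R} {x : R} (hx : x ∈ I) (q : ℕ) : x ^ q ∈ frobeniusPower I q :=
  Ideal.subset_span ⟨x, hx, rfl⟩

lemma fp_mul (I J : Ideal R) (q : ℕ) :
    frobeniusPower I q * frobeniusPower J q ≤ frobeniusPower (I * J) q := by
  rw [frobeniusPower, frobeniusPower, Ideal.span_mul_span]
  apply Ideal.span_le.2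
  rintro z hz
  simp only [Set.mem_mul] at hz
  obtain ⟨a, ⟨x, hx, rfl⟩, b, ⟨y, hy, rfl⟩, hz⟩ := hz
  rcases hz with rfl
  rw [← mul_pow]
  exact mem_fp (Ideal.mul_mem_mul hx hy) q

lemma fp_pow (I : Ideal R) (q k : ℕ) :
    (frobeniusPower I q) ^ k ≤ frobeniusPower (I ^ k) q := by
  induction k with
  | zero =>
    intro z hz
    rw [pow_zero, Ideal.one_eq_top] at hz ⊢
    have h1 : (1 : R) ∈ frobeniusPower (⊤ : Ideal R) q := by
      have : (1 : R) = 1 ^ q := (one_pow q).symm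
      rw [this]; exact mem_fp Submodule.mem_top q
    simpa using (frobeniusPower (⊤ : Ideal R) q).mul_mem_left z h1
  | succ k ih =>
    calc (frobeniusPower I q) ^ (k+1) = (frobeniusPower I q) ^ k * frobeniusPower I q := pow_succ _ _
      _ ≤ frobeniusPower (I ^ k) q * frobeniusPower I q := Ideal.mul_mono ih le_rfl
      _ ≤ frobeniusPower (I ^ k * I) q := fp_mul _ _ _
      _ = frobeniusPower (I ^ (k+1)) q := by rw [← pow_succ]

lemma fp_fp {p : ℕ} (hp : p.Prime) [CharP R p] (J : Ideal R) (q e : ℕ) :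
    frobeniusPower (frobeniusPower J q) (p ^ e) ≤ frobeniusPower J (q * p ^ e) := by
  haveI : Fact p.Prime := ⟨hp⟩
  apply Ideal.span_le.2
  rintro _ ⟨y, hy, rfl⟩
  show y ^ (p ^ e) ∈ frobeniusPower J (q * p ^ e)
  induction hy using Submodule.span_induction with
  | mem x hx =>
    obtain ⟨a, ha, rfl⟩ := hx
    rw [← pow_mul]
    exact mem_fp ha _
  | zero =>
    rw [zero_pow (pow_ne_zero e hp.ne_zero)]
    exact (frobeniusPower J (q * p ^ e)).zero_mem
  | add a b _ _ hia hib =>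
    rw [add_pow_char_pow]
    exact (frobeniusPower J (q * p ^ e)).add_mem hia hib
  | smul r a _ hia =>
    rw [smul_eq_mul, mul_pow]
    exact (frobeniusPower J (q * p ^ e)).mul_mem_left _ hia

/-- Core pigeonhole lemma: if `m ≥ μ(q-1)+1` then `𝔞^m ⊆ 𝔞^{[q]} · 𝔞^{m-q}`. -/
lemma core (q : ℕ) (hq : 1 ≤ q) (S : Finset R) :
    ∀ m, S.card * (q - 1) + 1 ≤ m →
      (Ideal.span (S : Set R)) ^ m ≤
        frobeniusPower (Ideal.span (S : Set R)) q * (Ideal.span (S : Set R)) ^ (m - q) := by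
  haveI := Classical.decEq R
  induction S using Finset.induction_on with
  | empty =>
    intro m hm
    simp only [Finset.coe_empty, Ideal.span_empty, ← Ideal.zero_eq_bot]
    rw [zero_pow (by omega : m ≠ 0)]
    exact zero_le
  | @insert x T hx ih =>
    intro m hm
    rw [Finset.card_insert_of_notMem hx, Nat.succ_mul] at hm
    set I : Ideal R := Ideal.span (T : Set R) with hI
    set A : Ideal R := Ideal.span ((insert x T : Finset R) : Set R) with hA
    have hIA : I ≤ A := Ideal.span_mono (by simp)
    have hxA : x ∈ A := Ideal.subset_span (by simp)
    have hsplit : A = Ideal.span {x} + I := by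
      rw [hA, Finset.coe_insert, Ideal.span_insert, Ideal.add_eq_sup]
    conv_lhs => rw [hsplit, add_pow]
    apply Finset.sum_induction _ (fun K => K ≤ frobeniusPower A q * A ^ (m - q))
    · intro a b ha hb
      rw [Ideal.add_eq_sup]; exact sup_le ha hb
    · exact bot_le
    · intro j hj
      rw [Finset.mem_range] at hj
      have hterm : Ideal.span {x} ^ j * I ^ (m - j) * ((m.choose j : ℕ) : Ideal R) ≤
          Ideal.span {x} ^ j * I ^ (m - j) := le_trans (Ideal.mul_mono le_rfl le_top)
          (by rw [Ideal.mul_top])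
      refine le_trans hterm ?_
      by_cases hjq : q ≤ j
      · -- x^j = x^q * x^(j-q)
        have : Ideal.span {x} ^ j ≤ frobeniusPower A q * A ^ (j - q) := by
          rw [Ideal.span_singleton_pow]
          have hxj : x ^ j = x ^ q * x ^ (j - q) := by rw [← pow_add]; congr 1; omega
          rw [hxj, ← Ideal.span_singleton_mul_span_singleton]
          exact Ideal.mul_mono ((Ideal.span_singleton_le_iff_mem _).2 (mem_fp hxA q))
            ((Ideal.span_singleton_le_iff_mem _).2 (Ideal.pow_mem_pow hxA _))
        calc Ideal.span {x} ^ j * I ^ (m - j)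
            ≤ (frobeniusPower A q * A ^ (j - q)) * A ^ (m - j) :=
              Ideal.mul_mono this (Ideal.pow_right_mono hIA _)
          _ = frobeniusPower A q * (A ^ (j - q) * A ^ (m - j)) := mul_assoc _ _ _
          _ = frobeniusPower A q * A ^ ((j - q) + (m - j)) := by rw [pow_add]
          _ ≤ frobeniusPower A q * A ^ (m - q) :=
              Ideal.mul_mono le_rfl (Ideal.pow_le_pow_right (by omega))
      · -- j < q, use induction hypothesis on I
        have hIH : I ^ (m - j) ≤ frobeniusPower I q * I ^ ((m - j) - q) :=
          ih (m - j) (by omega)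
        calc Ideal.span {x} ^ j * I ^ (m - j)
            ≤ A ^ j * (frobeniusPower I q * I ^ ((m - j) - q)) :=
              Ideal.mul_mono (Ideal.pow_right_mono
                ((Ideal.span_singleton_le_iff_mem _).2 hxA) _) hIH
          _ ≤ A ^ j * (frobeniusPower A q * A ^ ((m - j) - q)) :=
              Ideal.mul_mono le_rfl (Ideal.mul_mono (fp_mono hIA q)
                (Ideal.pow_right_mono hIA _))
          _ = frobeniusPower A q * (A ^ j * A ^ ((m - j) - q)) := by ring
          _ = frobeniusPower A q * A ^ (j + ((m - j) - q)) := by rw [pow_add]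
          _ ≤ frobeniusPower A q * A ^ (m - q) :=
              Ideal.mul_mono le_rfl (Ideal.pow_le_pow_right (by omega))

lemma iter_core (q : ℕ) (hq : 1 ≤ q) (S : Finset R) (k : ℕ) :
    ∀ m, k * q + S.card * (q - 1) + 1 ≤ m →
      (Ideal.span (S : Set R)) ^ m ≤
        (frobeniusPower (Ideal.span (S : Set R)) q) ^ k *
          (Ideal.span (S : Set R)) ^ (m - k * q) := by
  induction k with
  | zero =>
    intro m _
    simp
  | succ k ih =>
    intro m hm
    rw [Nat.succ_mul] at hm ⊢
    set A : Ideal R := Ideal.span (S : Set R)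
    calc A ^ m ≤ frobeniusPower A q * A ^ (m - q) := core q hq S m (by omega)
      _ ≤ frobeniusPower A q * ((frobeniusPower A q) ^ k * A ^ ((m - q) - k * q)) :=
          Ideal.mul_mono le_rfl (ih (m - q) (by omega))
      _ = (frobeniusPower A q) ^ (k + 1) * A ^ ((m - q) - k * q) := by ring
      _ = (frobeniusPower A q) ^ (k + 1) * A ^ (m - (k * q + q)) := by
          congr 2; omega

/-- The key ideal-theoretic step. -/
lemma key_step {p : ℕ} (hp : p.Prime) [CharP R p] (S : Finset R) (J : Ideal R)
    (e k m : ℕ) (hk : (Ideal.span (S : Set R)) ^ k ≤ frobeniusPower J (p ^ e))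
    (hm : k * p + S.card * (p - 1) + 1 ≤ m) :
    (Ideal.span (S : Set R)) ^ m ≤ frobeniusPower J (p ^ (e + 1)) := by
  set A : Ideal R := Ideal.span (S : Set R)
  have h1 : A ^ m ≤ (frobeniusPower A p) ^ k * A ^ (m - k * p) :=
    iter_core p hp.one_lt.le S k m hm
  have h2 : (frobeniusPower A p) ^ k * A ^ (m - k * p) ≤ (frobeniusPower A p) ^ k :=
    Ideal.mul_le_left
  have h3 : (frobeniusPower A p) ^ k ≤ frobeniusPower (A ^ k) p := fp_pow A p k
  have h4 : frobeniusPower (A ^ k) p ≤ frobeniusPower (frobeniusPower J (p ^ e)) p :=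
    fp_mono hk p
  have h5 : frobeniusPower (frobeniusPower J (p ^ e)) p ≤ frobeniusPower J (p ^ e * p) := by
    have := fp_fp hp J (p ^ e) 1
    rwa [pow_one] at this
  have h6 : p ^ e * p = p ^ (e + 1) := (pow_succ p e).symm
  rw [h6] at h5
  exact le_trans h1 (le_trans h2 (le_trans h3 (le_trans h4 h5)))

end Aux

/-- Existence of the `F`-threshold `c^J(𝔞)`: for a Noetherian ring `R` of prime
characteristic `p` and ideals `𝔞 ⊆ √J`, the limit of `ν^J_𝔞(p^e)/p^e` exists. -/
theorem stmt2 {R : Type*} [CommRing R] [IsNoetherianRing R]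
    (p : ℕ) (hp : p.Prime) [CharP R p]
    (𝔞 J : Ideal R) (hrad : 𝔞 ≤ J.radical)
    (ν : ℕ → ℕ)
    (hν : ∀ e : ℕ, IsGreatest {t : ℕ | ¬ 𝔞 ^ t ≤ frobeniusPower J (p ^ e)} (ν e)) :
    ∃ L : ℝ, Tendsto (fun e : ℕ => (ν e : ℝ) / (p : ℝ) ^ e) atTop (nhds L) := by
  classical
  obtain ⟨S, hS⟩ := (IsNoetherian.noetherian 𝔞 : 𝔞.FG)
  have hp2 : 2 ≤ p := hp.two_le
  set μ := S.card
  -- key recursive inequality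
  have KI : ∀ e : ℕ, ν (e + 1) + 1 ≤ (ν e + 1 + (μ + 1)) * p := by
    intro e
    set m := (ν e + 1 + (μ + 1)) * p with hmdef
    have hk : 𝔞 ^ (ν e + 1) ≤ frobeniusPower J (p ^ e) := by
      by_contra h
      exact absurd ((hν e).2 h) (by omega)
    have hkey : 𝔞 ^ m ≤ frobeniusPower J (p ^ (e + 1)) := by
      rw [← hS] at hk ⊢
      exact key_step hp S J e (ν e + 1) m hk (by
        have : μ * (p - 1) + 1 ≤ (μ + 1) * p := by nlinarith [Nat.sub_le p 1, hp2]
        calc (ν e + 1) * p + μ * (p - 1) + 1 ≤ (ν e + 1) * p + (μ + 1) * p := by omega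
          _ = m := by ring)
    by_contra hcon
    push_neg at hcon
    have hle : 𝔞 ^ (ν (e + 1)) ≤ 𝔞 ^ m := Ideal.pow_le_pow_right (by omega)
    exact (hν (e + 1)).1 (le_trans hle hkey)
  -- analysis part
  set C : ℝ := (μ : ℝ) + 2 with hC
  have hC0 : 0 < C := by positivity
  have hp0 : (0 : ℝ) < p := by exact_mod_cast hp.pos
  have hppow : ∀ e : ℕ, (0 : ℝ) < (p : ℝ) ^ e := fun e => pow_pos hp0 e
  set b : ℕ → ℝ := fun e => ((ν e : ℝ) + C) / (p : ℝ) ^ e with hb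
  have hb0 : ∀ e, 0 ≤ b e := fun e => div_nonneg (by positivity) (hppow e).le
  have h2p : (2:ℝ) ≤ (p:ℝ) := by exact_mod_cast hp2
  -- b (e+1) ≤ b e + C / 2^(e+1)
  have hbstep : ∀ e, b (e + 1) ≤ b e + C / 2 ^ (e + 1) := by
    intro e
    have h1 : ((ν (e + 1) : ℝ) + C) ≤ ((ν e : ℝ) + C) * p + C := by
      have h2 : ((ν (e + 1) : ℝ) + 1) ≤ ((ν e : ℝ) + 1 + ((μ : ℝ) + 1)) * p := by
        exact_mod_cast KI e
      have hp1 : (1 : ℝ) ≤ p := by exact_mod_cast hp.one_le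
      have : ((ν e : ℝ) + 1 + ((μ : ℝ) + 1)) = (ν e : ℝ) + C := by rw [hC]; ring
      nlinarith
    have h2 : b (e + 1) ≤ (((ν e : ℝ) + C) * p + C) / (p : ℝ) ^ (e + 1) := by
      exact div_le_div_of_nonneg_right h1 (hppow (e + 1)).le
    have h3 : (((ν e : ℝ) + C) * p + C) / (p : ℝ) ^ (e + 1) = b e + C / (p : ℝ) ^ (e + 1) := by
      rw [hb]
      have hpe : ((p : ℝ) ^ e) ≠ 0 := (hppow e).ne'
      have hpp : ((p : ℝ)) ≠ 0 := hp0.ne'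
      field_simp
      ring
    have h4 : C / (p : ℝ) ^ (e + 1) ≤ C / 2 ^ (e + 1) := by
      apply div_le_div_of_nonneg_left hC0.le (by positivity)
      exact pow_le_pow_left₀ (by norm_num) h2p (e + 1)
    calc b (e + 1) ≤ b e + C / (p : ℝ) ^ (e + 1) := by rw [← h3]; exact h2
      _ ≤ b e + C / 2 ^ (e + 1) := by linarith
  set c : ℕ → ℝ := fun e => b e + 2 * C / 2 ^ e with hc
  have hcanti : Antitone c := by
    apply antitone_nat_of_succ_le
    intro e
    have h1 := hbstep e
    have h2 : (2:ℝ) ^ (e+1) = 2 * 2 ^ e := by ring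
    have h3 : (0:ℝ) < 2 ^ e := by positivity
    rw [h2] at h1
    show b (e + 1) + 2 * C / 2 ^ (e + 1) ≤ b e + 2 * C / 2 ^ e
    rw [h2]
    have key : C / (2 * 2 ^ e) + 2 * C / (2 * 2 ^ e) ≤ 2 * C / 2 ^ e := by
      rw [← add_div, div_le_div_iff₀ (by positivity) h3]
      nlinarith
    linarith
  have hcbdd : BddBelow (Set.range c) := by
    refine ⟨0, ?_⟩
    rintro _ ⟨e, rfl⟩
    have h1 : (0:ℝ) ≤ 2 * C / 2 ^ e := by positivity
    show (0:ℝ) ≤ b e + 2 * C / 2 ^ e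
    linarith [hb0 e]
  have hctend : Tendsto c atTop (nhds (⨅ e, c e)) := tendsto_atTop_ciInf hcanti hcbdd
  set L : ℝ := ⨅ e, c e
  -- 2*C/2^e → 0
  have hgeo : Tendsto (fun e : ℕ => 2 * C / 2 ^ e) atTop (nhds 0) := by
    have h1 : Tendsto (fun e : ℕ => ((1:ℝ)/2) ^ e) atTop (nhds 0) :=
      tendsto_pow_atTop_nhds_zero_of_lt_one (by norm_num) (by norm_num)
    have h2 := h1.const_mul (2 * C)
    rw [mul_zero] at h2
    have heq : (fun e : ℕ => 2 * C / 2 ^ e) = fun e : ℕ => 2 * C * (1/2 : ℝ) ^ e := by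
      funext e
      rw [div_pow, one_pow]
      ring
    rw [heq]
    exact h2
  have hbtend : Tendsto b atTop (nhds L) := by
    have h := hctend.sub hgeo
    rw [sub_zero] at h
    have heq : b = fun e => c e - 2 * C / 2 ^ e := by
      funext e
      show b e = b e + 2 * C / 2 ^ e - 2 * C / 2 ^ e
      ring
    rw [heq]
    exact h
  -- C/p^e → 0
  have hgeo2 : Tendsto (fun e : ℕ => C / (p:ℝ) ^ e) atTop (nhds 0) := by
    have h1 : Tendsto (fun e : ℕ => ((1:ℝ)/p) ^ e) atTop (nhds 0) :=
      tendsto_pow_atTop_nhds_zero_of_lt_one (by positivity)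
        (by rw [div_lt_one hp0]; linarith)
    have h2 := h1.const_mul C
    rw [mul_zero] at h2
    have heq : (fun e : ℕ => C / (p:ℝ) ^ e) = fun e : ℕ => C * (1/(p:ℝ)) ^ e := by
      funext e
      rw [div_pow, one_pow]
      ring
    rw [heq]
    exact h2
  refine ⟨L, ?_⟩
  have h := hbtend.sub hgeo2
  rw [sub_zero] at h
  have heq : (fun e : ℕ => (ν e : ℝ) / (p : ℝ) ^ e) = fun e => b e - C / (p:ℝ) ^ e := by
    funext e
    show (ν e : ℝ) / (p : ℝ) ^ e = ((ν e : ℝ) + C) / (p : ℝ) ^ e - C / (p:ℝ) ^ e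
    rw [div_sub_div_same]
    ring_nf
  rw [heq]
  exact h
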